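/- (Intertwining of the PEPS map with the Dango operations.) For every ξ ∈ ℝ: P · T_Z(ξ) = U(ξ) · P and P · T_X(ξ) = (Vᴴ · U(ξ) · V) · P, as identities of 3×4 complex matrices (matrices from Fin 2 × Fin 2 to Fin 3). -/

import Mathlib

set_option maxHeartbeats 1000000


open Matrix Complex
open scoped ComplexConjugate

noncomputable section

/-- Pauli matrix `X` -/
def X : Matrix (Fin 2) (Fin 2) ℂ := !![0, 1; 1, 0]

/-- Pauli matrix `Z` -/
def Z : Matrix (Fin 2) (Fin 2) ℂ := !![1, 0; 0, -1]

/-- the AKLT tensors `A[1] = X`, `A[2] = X·Z`, `A[3] = Z` (indexed by `Fin 3`) -/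
def A : Fin 3 → Matrix (Fin 2) (Fin 2) ℂ := ![X, X * Z, Z]

/-- the PEPS map `P l (i,j) = (1/√2)·(A l) i j` -/
def P : Matrix (Fin 3) (Fin 2 × Fin 2) ℂ :=
  Matrix.of fun l p => (1 / (Real.sqrt 2 : ℂ)) * A l p.1 p.2

/-- Bell state `η₁ = (|00⟩+|11⟩)/√2` -/
def bell1 : Fin 2 × Fin 2 → ℂ := fun p =>
  if p = ((0 : Fin 2), (0 : Fin 2)) then ((1 / Real.sqrt 2 : ℝ) : ℂ)
  else if p = (1, 1) then ((1 / Real.sqrt 2 : ℝ) : ℂ) else 0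

/-- Bell state `η₂ = (|00⟩−|11⟩)/√2` -/
def bell2 : Fin 2 × Fin 2 → ℂ := fun p =>
  if p = ((0 : Fin 2), (0 : Fin 2)) then ((1 / Real.sqrt 2 : ℝ) : ℂ)
  else if p = (1, 1) then -((1 / Real.sqrt 2 : ℝ) : ℂ) else 0

/-- Bell state `η₃ = (|10⟩+|01⟩)/√2` -/
def bell3 : Fin 2 × Fin 2 → ℂ := fun p =>
  if p = ((1 : Fin 2), (0 : Fin 2)) then ((1 / Real.sqrt 2 : ℝ) : ℂ)
  else if p = (0, 1) then ((1 / Real.sqrt 2 : ℝ) : ℂ) else 0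

/-- Bell state `η₄ = (|10⟩−|01⟩)/√2` -/
def bell4 : Fin 2 × Fin 2 → ℂ := fun p =>
  if p = ((1 : Fin 2), (0 : Fin 2)) then ((1 / Real.sqrt 2 : ℝ) : ℂ)
  else if p = (0, 1) then -((1 / Real.sqrt 2 : ℝ) : ℂ) else 0

/-- outer product `|v⟩⟨w|` -/
def outer {n : Type*} (v w : n → ℂ) : Matrix n n ℂ :=
  Matrix.of fun i j => v i * conj (w j)

/-- the two-qubit phase gate `T_Z(ξ)` -/
def TZ (ξ : ℝ) : Matrix (Fin 2 × Fin 2) (Fin 2 × Fin 2) ℂ :=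
  Matrix.diagonal fun p =>
    if p = ((0 : Fin 2), (1 : Fin 2)) then Complex.exp (Complex.I * ξ) else 1

/-- the two-qubit gate `T_X(ξ)` -/
def TX (ξ : ℝ) : Matrix (Fin 2 × Fin 2) (Fin 2 × Fin 2) ℂ :=
  ((1 + Complex.exp (Complex.I * ξ)) / 2) • (outer bell2 bell2 + outer bell4 bell4)
    + ((1 - Complex.exp (Complex.I * ξ)) / 2) • (outer bell2 bell4 + outer bell4 bell2)
    + outer bell1 bell1 + outer bell3 bell3

/-- the qutrit gate `U(ξ)`: `U(ξ)|1⟩ = ((1+e^{iξ})/2)|1⟩ + ((1−e^{iξ})/2)|2⟩`,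
`U(ξ)|2⟩ = ((1−e^{iξ})/2)|1⟩ + ((1+e^{iξ})/2)|2⟩`, `U(ξ)|3⟩ = |3⟩` -/
def U (ξ : ℝ) : Matrix (Fin 3) (Fin 3) ℂ :=
  !![(1 + Complex.exp (Complex.I * ξ)) / 2, (1 - Complex.exp (Complex.I * ξ)) / 2, 0;
     (1 - Complex.exp (Complex.I * ξ)) / 2, (1 + Complex.exp (Complex.I * ξ)) / 2, 0;
     0, 0, 1]

/-- the qutrit permutation `V`: `V|1⟩=|3⟩`, `V|2⟩=|1⟩`, `V|3⟩=|2⟩` -/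
def V : Matrix (Fin 3) (Fin 3) ℂ := !![0, 1, 0; 0, 0, 1; 1, 0, 0]

/-- **intertwining of the PEPS map with the Dango operations.** For every
`ξ ∈ ℝ`, `P·T_Z(ξ) = U(ξ)·P` and `P·T_X(ξ) = (Vᴴ·U(ξ)·V)·P`. -/
theorem statement15 (ξ : ℝ) :
    P * TZ ξ = U ξ * P ∧ P * TX ξ = (Vᴴ * U ξ * V) * P := by
  have hs : ((Real.sqrt 2 : ℝ) : ℂ) * ((Real.sqrt 2 : ℝ) : ℂ) = 2 := by
    norm_cast
    exact Real.mul_self_sqrt (by norm_num)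
  have hs2 : ((Real.sqrt 2 : ℝ) : ℂ) ^ 2 = 2 := by rw [sq, hs]
  have hne : ((Real.sqrt 2 : ℝ) : ℂ) ≠ 0 := by
    intro h; rw [h] at hs; simp at hs
  constructor
  · ext l p
    obtain ⟨i, j⟩ := p
    fin_cases l <;> fin_cases i <;> fin_cases j <;>
      simp [Matrix.mul_apply, Fintype.sum_prod_type, Fin.sum_univ_succ, P, TZ, U, A, X, Z,
        Matrix.diagonal, Prod.ext_iff, Fin.ext_iff, -Fin.val_eq_zero_iff] <;>
      ring
  · ext l p
    obtain ⟨i, j⟩ := p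
    have hi : ((Real.sqrt 2 : ℝ) : ℂ)⁻¹ = ((Real.sqrt 2 : ℝ) : ℂ) / 2 := by
      rw [inv_eq_one_div, div_eq_div_iff hne two_ne_zero, one_mul, hs]
    have h3 : ((Real.sqrt 2 : ℝ) : ℂ) ^ 3 = 2 * ((Real.sqrt 2 : ℝ) : ℂ) := by
      rw [pow_succ, hs2]
    have h4 : ((Real.sqrt 2 : ℝ) : ℂ) ^ 4 = 4 := by
      rw [pow_succ, h3, mul_assoc, hs]; norm_num
    have h5 : ((Real.sqrt 2 : ℝ) : ℂ) ^ 5 = 4 * ((Real.sqrt 2 : ℝ) : ℂ) := by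
      rw [pow_succ, h4]
    fin_cases l <;> fin_cases i <;> fin_cases j <;>
      simp [Matrix.mul_apply, Fintype.sum_prod_type, Fin.sum_univ_succ, P, TX, U, V, A, X, Z, outer,
        bell1, bell2, bell3, bell4, Prod.ext_iff, Fin.ext_iff,
        Complex.conj_ofReal, hi, map_ofNat, _root_.map_one, map_div₀, -Fin.val_eq_zero_iff] <;>
      ring_nf <;>
      simp only [h3, h4, h5, hs2, hs] <;>
      try ring

end
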